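/- For every γ ∈ (0,1) there exist c = c(γ) > 0, L = L(γ) and K = K(γ) such that every 2-edge-coloured graph G on n ≥ K vertices with red minimum degree and blue minimum degree both at least γn contains at least c·n^ℓ copies of a colour-alternating cycle of some fixed even length ℓ with 4 ≤ ℓ ≤ L. -/

import Mathlib

open Finset

/-- The cyclic successor on `Fin ℓ`. -/
def cyc {ℓ : ℕ} (i : Fin ℓ) : Fin ℓ := ⟨(i.val + 1) % ℓ, Nat.mod_lt _ i.pos⟩

private lemma exists_good_s {r : ℝ} (h0 : 0 ≤ r) (h1 : r < 1) :
    ∃ s : ℕ, 3 ≤ s ∧ (s:ℝ) * r ^ (s-1) ≤ 1/2 := by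
  have hsum : Summable (fun k : ℕ => (k:ℝ)^1 * r^k) :=
    summable_pow_mul_geometric_of_norm_lt_one 1 (by rwa [Real.norm_eq_abs, abs_of_nonneg h0])
  have h2 : Filter.Tendsto (fun k : ℕ => (k:ℝ)^1 * r^k) Filter.atTop (nhds 0) :=
    hsum.tendsto_atTop_zero
  have h3 : Filter.Tendsto (fun k : ℕ => r^k) Filter.atTop (nhds 0) :=
    tendsto_pow_atTop_nhds_zero_of_lt_one h0 h1
  have h4 : Filter.Tendsto (fun k : ℕ => ((k:ℝ)+1) * r^k) Filter.atTop (nhds 0) := by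
    have := h2.add h3
    simp only [pow_one, add_zero] at this
    convert this using 2 with k
    ring
  have h5 : ∀ᶠ k : ℕ in Filter.atTop, ((k:ℝ)+1) * r^k < 1/2 :=
    Filter.Tendsto.eventually_lt_const (by norm_num : (0:ℝ) < 1/2) h4
  obtain ⟨N, hN⟩ := Filter.eventually_atTop.mp h5
  refine ⟨max N 2 + 1, by omega, ?_⟩
  have hs1 : (max N 2 + 1) - 1 = max N 2 := by omega
  rw [hs1]
  have := hN (max N 2) (le_max_left _ _)
  have hcast : ((max N 2 + 1 : ℕ) : ℝ) = ((max N 2 : ℕ) : ℝ) + 1 := by push_cast; ring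
  rw [hcast]
  linarith

private lemma ncard_eq_filter_card {α : Type*} [Fintype α] (p : α → Prop) [DecidablePred p] :
    {x | p x}.ncard = (univ.filter p).card := by
  rw [Set.ncard_eq_toFinset_card', Set.toFinset_setOf]

private lemma card_fixed_coords {s t n : ℕ} (σ : Fin t → Fin s) (hσ : Function.Injective σ)
    (f₀ : Fin t → Fin n) :
    (univ.filter (fun g : Fin s → Fin n => ∀ k, g (σ k) = f₀ k)).card ≤ n ^ (s - t) := by
  classical
  have hcard : Fintype.card {j : Fin s // j ∉ Set.range σ} = s - t := by
    have h1 : Fintype.card {j : Fin s // j ∈ Set.range σ} = t := by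
      rw [Fintype.card_congr (Equiv.subtypeEquiv (Equiv.refl _) (fun j => Iff.rfl))]
      rw [Fintype.card_congr (Equiv.ofInjective σ hσ).symm, Fintype.card_fin]
    have := Fintype.card_subtype_compl (fun j : Fin s => j ∈ Set.range σ)
    rw [this, h1, Fintype.card_fin]
  calc (univ.filter (fun g : Fin s → Fin n => ∀ k, g (σ k) = f₀ k)).card
      ≤ (univ : Finset ({j : Fin s // j ∉ Set.range σ} → Fin n)).card := by
        apply Finset.card_le_card_of_injOn (fun g => fun j => g j.val)
        · intro g _; exact mem_univ _
        · intro g hg g' hg' hgg'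
          simp only [mem_coe, mem_filter, mem_univ, true_and] at hg hg'
          funext j
          by_cases hj : j ∈ Set.range σ
          · obtain ⟨k, rfl⟩ := hj
            rw [hg k, hg' k]
          · exact congrFun hgg' ⟨j, hj⟩
    _ = n ^ (s - t) := by
        rw [Finset.card_univ, Fintype.card_fun, Fintype.card_fin, hcard]

private lemma card_range_superset {s t n : ℕ} (hs : 0 < s) (f₀ : Fin t → Fin n)
    (h₀ : Function.Injective f₀) :
    (univ.filter (fun g : Fin s → Fin n => ∀ k, ∃ j, g j = f₀ k)).card
      ≤ s ^ t * n ^ (s - t) := by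
  classical
  set S := univ.filter (fun g : Fin s → Fin n => ∀ k, ∃ j, g j = f₀ k) with hS
  set σfun : (Fin s → Fin n) → (Fin t → Fin s) := fun g k =>
    if h : ∃ j, g j = f₀ k then h.choose else ⟨0, hs⟩ with hσfun
  have key : ∀ g ∈ S, ∀ k, g (σfun g k) = f₀ k := by
    intro g hg k
    simp only [hS, mem_filter, mem_univ, true_and] at hg
    simp only [hσfun, dif_pos (hg k)]
    exact (hg k).choose_spec
  have hinj : ∀ g ∈ S, Function.Injective (σfun g) := by
    intro g hg k k' hkk'
    apply h₀
    rw [← key g hg k, ← key g hg k', hkk']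
  calc S.card ≤ (n ^ (s-t)) * (S.image σfun).card := by
        apply Finset.card_le_mul_card_image
        intro σ₀ hσ₀
        obtain ⟨g₀, hg₀, hg₀eq⟩ := Finset.mem_image.mp hσ₀
        have hσ₀inj : Function.Injective σ₀ := hg₀eq ▸ hinj g₀ hg₀
        calc (S.filter (fun g => σfun g = σ₀)).card
            ≤ (univ.filter (fun g : Fin s → Fin n => ∀ k, g (σ₀ k) = f₀ k)).card := by
              apply Finset.card_le_card
              intro g hg
              simp only [mem_filter, mem_univ, true_and] at hg ⊢
              intro k
              rw [← hg.2]
              exact key g hg.1 k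
          _ ≤ n ^ (s - t) := card_fixed_coords σ₀ hσ₀inj f₀
    _ ≤ (n ^ (s-t)) * s ^ t := by
        apply Nat.mul_le_mul_left
        calc (S.image σfun).card ≤ (univ : Finset (Fin t → Fin s)).card :=
              Finset.card_le_card (subset_univ _)
          _ = s ^ t := by rw [Finset.card_univ, Fintype.card_fun, Fintype.card_fin, Fintype.card_fin]
    _ = s ^ t * n ^ (s-t) := Nat.mul_comm _ _

private lemma card_inj_pi_ge {t n : ℕ} (A : Fin t → Finset (Fin n)) (m' : ℕ)
    (hA : ∀ j, m' ≤ (A j).card) :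
    (m' ^ t : ℝ) - (t:ℝ)^2 * (n:ℝ)^(t-1)
      ≤ (((Fintype.piFinset A).filter (fun v => Function.Injective v)).card : ℝ) := by
  classical
  have htot : m' ^ t ≤ (Fintype.piFinset A).card := by
    rw [Fintype.card_piFinset]
    calc m' ^ t = ∏ _j : Fin t, m' := by rw [Finset.prod_const, Finset.card_univ, Fintype.card_fin]
    _ ≤ ∏ j, (A j).card := Finset.prod_le_prod (fun _ _ => Nat.zero_le _) (fun j _ => hA j)
  have hpair : ∀ a b : Fin t, a ≠ b →
      (univ.filter (fun v : Fin t → Fin n => v a = v b)).card ≤ n ^ (t-1) := by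
    intro a b hab
    calc (univ.filter (fun v : Fin t → Fin n => v a = v b)).card
        ≤ (univ : Finset ({j : Fin t // j ≠ b} → Fin n)).card := by
          apply Finset.card_le_card_of_injOn (fun v => fun j => v j.val)
          · intro v _; exact mem_univ _
          · intro v hv v' hv' hvv'
            simp only [mem_coe, mem_filter, mem_univ, true_and] at hv hv'
            funext j
            by_cases hj : j = b
            · subst hj
              rw [← hv, ← hv']
              exact congrFun hvv' ⟨a, hab⟩
            · exact congrFun hvv' ⟨j, hj⟩
      _ = n ^ (t - 1) := by
          rw [Finset.card_univ, Fintype.card_fun, Fintype.card_fin]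
          congr 1
          have := Fintype.card_subtype_compl (fun j : Fin t => j = b)
          simp only [Fintype.card_subtype_eq, Fintype.card_fin] at this
          exact this
  have hnoninj : ((Fintype.piFinset A).filter (fun v => ¬ Function.Injective v)).card
      ≤ t^2 * n ^ (t-1) := by
    have hsub : (Fintype.piFinset A).filter (fun v => ¬ Function.Injective v)
        ⊆ (univ : Finset (Fin t)).offDiag.biUnion
            (fun p => univ.filter (fun v : Fin t → Fin n => v p.1 = v p.2)) := by
      intro v hv
      rw [mem_filter] at hv
      simp only [Function.Injective] at hv
      push_neg at hv
      obtain ⟨a, b, hab, hne⟩ := hv.2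
      apply Finset.mem_biUnion.mpr
      exact ⟨(a, b), Finset.mem_offDiag.mpr ⟨mem_univ _, mem_univ _, hne⟩,
        Finset.mem_filter.mpr ⟨mem_univ _, hab⟩⟩
    calc ((Fintype.piFinset A).filter (fun v => ¬ Function.Injective v)).card
        ≤ _ := Finset.card_le_card hsub
      _ ≤ ∑ p ∈ (univ : Finset (Fin t)).offDiag,
            (univ.filter (fun v : Fin t → Fin n => v p.1 = v p.2)).card :=
          Finset.card_biUnion_le
      _ ≤ ∑ _p ∈ (univ : Finset (Fin t)).offDiag, n ^ (t-1) := by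
          apply Finset.sum_le_sum
          intro p hp
          exact hpair p.1 p.2 (Finset.mem_offDiag.mp hp).2.2
      _ = (univ : Finset (Fin t)).offDiag.card * n ^ (t-1) := by rw [Finset.sum_const, smul_eq_mul]
      _ ≤ t^2 * n ^ (t-1) := by
          apply Nat.mul_le_mul_right
          rw [Finset.offDiag_card, Finset.card_univ, Fintype.card_fin, sq]
          omega
  have hsplit := Finset.card_filter_add_card_filter_not
    (s := Fintype.piFinset A) (p := fun v => Function.Injective v)
  have h1 : (m' ^ t : ℝ) ≤ ((Fintype.piFinset A).card : ℝ) := by exact_mod_cast htot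
  have h2 : (((Fintype.piFinset A).filter (fun v => ¬ Function.Injective v)).card : ℝ)
      ≤ (t:ℝ)^2 * (n:ℝ)^(t-1) := by exact_mod_cast hnoninj
  have h3 : (((Fintype.piFinset A).filter (fun v => Function.Injective v)).card : ℝ)
      + (((Fintype.piFinset A).filter (fun v => ¬ Function.Injective v)).card : ℝ)
      = ((Fintype.piFinset A).card : ℝ) := by exact_mod_cast hsplit
  push_cast at h1 ⊢
  linarith

private lemma extract_cycle {n s : ℕ} (D : Fin n → Fin n → Prop) (hD : ∀ x, ¬ D x x)
    (hs : 0 < s) (g : Fin s → Fin n) (hg : ∀ i, ∃ j, D (g i) (g j)) :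
    ∃ t, 2 ≤ t ∧ t ≤ s ∧ ∃ f : ℕ → Fin n,
      (∀ k k', k < t → k' < t → f k = f k' → k = k') ∧
      (∀ k, k < t → D (f k) (f ((k+1) % t))) ∧
      (∀ k, k < t → ∃ j, g j = f k) := by
  classical
  set W : Finset (Fin n) := univ.image g with hWdef
  have hW : ∀ w ∈ W, ∃ w', w' ∈ W ∧ D w w' := by
    intro w hw
    obtain ⟨i, _, rfl⟩ := Finset.mem_image.mp hw
    obtain ⟨j, hj⟩ := hg i
    exact ⟨g j, Finset.mem_image.mpr ⟨j, mem_univ _, rfl⟩, hj⟩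
  set H : Fin n → Fin n := fun w => if h : ∃ w', w' ∈ W ∧ D w w' then h.choose else w with hHdef
  have hH : ∀ w ∈ W, H w ∈ W ∧ D w (H w) := by
    intro w hw
    have h := hW w hw
    simp only [hHdef, dif_pos h]
    exact h.choose_spec
  set x : ℕ → Fin n := fun i => H^[i] (g ⟨0, hs⟩) with hxdef
  have hx : ∀ i, x i ∈ W := by
    intro i
    induction i with
    | zero => exact Finset.mem_image.mpr ⟨⟨0, hs⟩, mem_univ _, rfl⟩
    | succ i ih =>
        have : x (i+1) = H (x i) := Function.iterate_succ_apply' H i _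
        rw [this]
        exact (hH _ ih).1
  have hxD : ∀ i, D (x i) (x (i+1)) := by
    intro i
    have : x (i+1) = H (x i) := Function.iterate_succ_apply' H i _
    rw [this]
    exact (hH _ (hx i)).2
  have hcard : W.card < (Finset.range (s+1)).card := by
    rw [Finset.card_range]
    exact Nat.lt_succ_of_le (le_trans Finset.card_image_le (by simp))
  obtain ⟨a, ha, b, hb, hab, hxab⟩ :=
    Finset.exists_ne_map_eq_of_card_lt_of_maps_to hcard (fun i _ => hx i)
  rw [Finset.mem_range] at ha hb
  have hQex : ∃ b', ∃ a', a' < b' ∧ x a' = x b' := by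
    rcases lt_or_gt_of_ne hab with h | h
    · exact ⟨b, a, h, hxab⟩
    · exact ⟨a, b, h, hxab.symm⟩
  set b₀ := Nat.find hQex with hb₀def
  obtain ⟨a₀, ha₀lt, heq⟩ := Nat.find_spec hQex
  have hmin : ∀ b' < b₀, ¬ ∃ a', a' < b' ∧ x a' = x b' := fun b' h => Nat.find_min hQex h
  have hb₀s : b₀ ≤ s := by
    rcases lt_or_gt_of_ne hab with h | h
    · exact le_trans (Nat.find_le ⟨a, h, hxab⟩) (by omega)
    · exact le_trans (Nat.find_le ⟨b, h, hxab.symm⟩) (by omega)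
  set t := b₀ - a₀ with htdef
  have ht1 : 1 ≤ t := by omega
  have ht2 : 2 ≤ t := by
    rcases Nat.lt_or_ge t 2 with h | h
    · exfalso
      have : t = 1 := by omega
      have hb : b₀ = a₀ + 1 := by omega
      have := hxD a₀
      rw [← hb, ← heq] at this
      exact hD _ this
    · exact h
  refine ⟨t, ht2, by omega, fun k => x (a₀ + k), ?_, ?_, ?_⟩
  · -- injectivity
    have key : ∀ k k', k < k' → k' < t → x (a₀ + k) ≠ x (a₀ + k') := by
      intro k k' hkk' hk' hne
      exact hmin (a₀ + k') (by omega) ⟨a₀ + k, by omega, hne⟩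
    intro k k' hk hk' hne
    rcases Nat.lt_trichotomy k k' with h | h | h
    · exact absurd hne (key k k' h hk')
    · exact h
    · exact absurd hne.symm (key k' k h hk)
  · -- edges
    intro k hk
    by_cases hk1 : k + 1 < t
    · rw [Nat.mod_eq_of_lt hk1]
      have := hxD (a₀ + k)
      rwa [show a₀ + k + 1 = a₀ + (k+1) from rfl] at this
    · have hkt : k + 1 = t := by omega
      rw [hkt, Nat.mod_self]
      have := hxD (a₀ + k)
      have hxb : x (a₀ + 0) = x (a₀ + k + 1) := by
        rw [show a₀ + k + 1 = b₀ by omega, Nat.add_zero]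
        exact heq
      rwa [← hxb] at this
  · -- range
    intro k _
    obtain ⟨j, _, hj⟩ := Finset.mem_image.mp (hx (a₀ + k))
    exact ⟨j, hj⟩

private lemma double_count {n : ℕ} (N₁ N₂ : Fin n → Finset (Fin n))
    (hsym : ∀ v w, w ∈ N₂ v ↔ v ∈ N₂ w) (u : Fin n) :
    ∑ w, ((N₁ u) ∩ (N₂ w)).card = ∑ v ∈ N₁ u, (N₂ v).card := by
  classical
  calc ∑ w, ((N₁ u) ∩ (N₂ w)).card
      = ∑ w, ∑ v ∈ N₁ u, if v ∈ N₂ w then 1 else 0 := by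
        apply Finset.sum_congr rfl
        intro w _
        rw [← Finset.filter_mem_eq_inter, Finset.card_filter]
    _ = ∑ v ∈ N₁ u, ∑ w, if v ∈ N₂ w then 1 else 0 := Finset.sum_comm
    _ = ∑ v ∈ N₁ u, (N₂ v).card := by
        apply Finset.sum_congr rfl
        intro v _
        rw [← Finset.card_filter]
        congr 1
        rw [show (univ.filter (fun w => v ∈ N₂ w)) = univ.filter (fun w => w ∈ N₂ v) from
          Finset.filter_congr (fun w _ => by rw [hsym])]
        exact Finset.filter_univ_mem _

private lemma outdeg_bound {n : ℕ} (γ : ℝ) (hγ0 : 0 < γ) (N₁ N₂ : Fin n → Finset (Fin n))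
    (hsym : ∀ v w, w ∈ N₂ v ↔ v ∈ N₂ w)
    (h1 : ∀ u, γ * n ≤ ((N₁ u).card : ℝ)) (h2 : ∀ u, γ * n ≤ ((N₂ u).card : ℝ))
    (m : ℕ) (hm : (m:ℝ) ≤ γ^2 * n / 2 + 1) (hm1 : 1 ≤ m) (hn : 8 ≤ γ^2 * (n:ℝ)) (hn0 : 0 < n)
    (D : Fin n → Fin n → Prop) [DecidableRel D]
    (hD : ∀ u w, D u w ↔ (u ≠ w ∧ m ≤ ((N₁ u) ∩ (N₂ w)).card)) (u : Fin n) :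
    γ^2 * n / 4 ≤ ((univ.filter (fun w => D u w)).card : ℝ) := by
  classical
  have hγn : 0 ≤ γ * n := by positivity
  -- lower bound for the sum
  have hlow : γ^2 * n * n ≤ ∑ w, (((N₁ u) ∩ (N₂ w)).card : ℝ) := by
    have hdc := double_count N₁ N₂ hsym u
    have : ∑ w, (((N₁ u) ∩ (N₂ w)).card : ℝ) = ∑ v ∈ N₁ u, ((N₂ v).card : ℝ) := by
      exact_mod_cast congrArg (Nat.cast : ℕ → ℝ) hdc
    rw [this]
    have step1 : (N₁ u).card • (γ * n) ≤ ∑ v ∈ N₁ u, ((N₂ v).card : ℝ) :=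
      Finset.card_nsmul_le_sum _ _ _ (fun v _ => h2 v)
    rw [nsmul_eq_mul] at step1
    have step2 : (γ * n) * (γ * n) ≤ ((N₁ u).card : ℝ) * (γ * n) := by
      apply mul_le_mul_of_nonneg_right (h1 u) hγn
    calc γ^2 * n * n = (γ * n) * (γ * n) := by ring
      _ ≤ ((N₁ u).card : ℝ) * (γ * n) := step2
      _ ≤ _ := step1
  -- upper bound for the sum
  set d := (univ.filter (fun w => D u w)).card with hd
  have hup : ∑ w, (((N₁ u) ∩ (N₂ w)).card : ℝ) ≤ (d + 1) * n + n * ((m:ℝ) - 1) := by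
    set A : Finset (Fin n) := insert u (univ.filter (fun w => D u w)) with hA
    have hsplit : ∑ w ∈ univ \ A, (((N₁ u) ∩ (N₂ w)).card : ℝ)
        + ∑ w ∈ A, (((N₁ u) ∩ (N₂ w)).card : ℝ) = ∑ w, (((N₁ u) ∩ (N₂ w)).card : ℝ) :=
      Finset.sum_sdiff (subset_univ A)
    have hAcard : (A.card : ℝ) ≤ d + 1 := by
      have := Finset.card_insert_le u (univ.filter (fun w => D u w))
      exact_mod_cast this
    have hAbound : ∑ w ∈ A, (((N₁ u) ∩ (N₂ w)).card : ℝ) ≤ (d + 1) * n := by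
      calc ∑ w ∈ A, (((N₁ u) ∩ (N₂ w)).card : ℝ) ≤ ∑ _w ∈ A, (n:ℝ) := by
            apply Finset.sum_le_sum
            intro w _
            have : ((N₁ u) ∩ (N₂ w)).card ≤ n := by
              calc ((N₁ u) ∩ (N₂ w)).card ≤ (univ : Finset (Fin n)).card :=
                    Finset.card_le_card (subset_univ _)
                _ = n := by rw [card_univ, Fintype.card_fin]
            exact_mod_cast this
        _ = (A.card : ℝ) * n := by rw [Finset.sum_const, nsmul_eq_mul]
        _ ≤ (d + 1) * n := by
            apply mul_le_mul_of_nonneg_right hAcard (by positivity)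
    have hrest : ∑ w ∈ univ \ A, (((N₁ u) ∩ (N₂ w)).card : ℝ) ≤ n * ((m:ℝ) - 1) := by
      calc ∑ w ∈ univ \ A, (((N₁ u) ∩ (N₂ w)).card : ℝ) ≤ ∑ _w ∈ univ \ A, ((m:ℝ) - 1) := by
            apply Finset.sum_le_sum
            intro w hw
            simp only [hA, Finset.mem_sdiff, Finset.mem_insert, Finset.mem_filter,
              Finset.mem_univ, true_and] at hw
            push_neg at hw
            have hwu : w ≠ u := hw.1
            have hnD : ¬ D u w := hw.2
            rw [hD u w] at hnD
            push_neg at hnD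
            have := hnD (Ne.symm hwu)
            have hlt : ((N₁ u) ∩ (N₂ w)).card + 1 ≤ m := this
            have : (((N₁ u) ∩ (N₂ w)).card : ℝ) + 1 ≤ (m:ℝ) := by exact_mod_cast hlt
            linarith
        _ = ((univ \ A).card : ℝ) * ((m:ℝ) - 1) := by rw [Finset.sum_const, nsmul_eq_mul]
        _ ≤ n * ((m:ℝ) - 1) := by
            apply mul_le_mul_of_nonneg_right _ (by
              have : (1:ℝ) ≤ (m:ℝ) := by exact_mod_cast hm1
              linarith)
            have : (univ \ A).card ≤ n := by
              calc (univ \ A).card ≤ (univ : Finset (Fin n)).card :=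
                    Finset.card_le_card (subset_univ _)
                _ = n := by rw [card_univ, Fintype.card_fin]
            exact_mod_cast this
    linarith
  -- combine
  have hcomb : γ^2 * n * n ≤ (d + 1) * n + n * ((m:ℝ) - 1) := le_trans hlow hup
  have hm' : (m:ℝ) - 1 ≤ γ^2 * n / 2 := by linarith
  have hn' : (0:ℝ) < n := by exact_mod_cast hn0
  have : γ^2 * n * n ≤ d * n + n + n * (γ^2 * n / 2) := by nlinarith
  have hdn : (γ^2 * n / 4) * n ≤ (d:ℝ) * n := by nlinarith
  exact le_of_mul_le_mul_right hdn hn'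

private lemma bad_count {n s : ℕ} (D : Fin n → Fin n → Prop) [DecidableRel D] (d : ℕ)
    (hdeg : ∀ u, d ≤ (univ.filter (fun w => D u w)).card) :
    (univ.filter (fun g : Fin s → Fin n => ¬ ∀ i, ∃ j, D (g i) (g j))).card
      ≤ s * (n * (n - d)^(s-1)) := by
  classical
  have hsub : (univ.filter (fun g : Fin s → Fin n => ¬ ∀ i, ∃ j, D (g i) (g j)))
      ⊆ univ.biUnion (fun i : Fin s =>
          univ.filter (fun g : Fin s → Fin n => ∀ j, ¬ D (g i) (g j))) := by
    intro g hg
    simp only [mem_filter, mem_univ, true_and] at hg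
    push_neg at hg
    obtain ⟨i, hi⟩ := hg
    apply Finset.mem_biUnion.mpr
    exact ⟨i, mem_univ _, Finset.mem_filter.mpr ⟨mem_univ _, hi⟩⟩
  have hone : ∀ i : Fin s,
      (univ.filter (fun g : Fin s → Fin n => ∀ j, ¬ D (g i) (g j))).card
        ≤ n * (n - d)^(s-1) := by
    intro i
    have hsub2 : (univ.filter (fun g : Fin s → Fin n => ∀ j, ¬ D (g i) (g j)))
        ⊆ univ.biUnion (fun u : Fin n => Fintype.piFinset (fun j : Fin s =>
            if j = i then {u} else (univ \ univ.filter (fun w => D u w)))) := by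
      intro g hg
      simp only [mem_filter, mem_univ, true_and] at hg
      apply Finset.mem_biUnion.mpr
      refine ⟨g i, mem_univ _, Fintype.mem_piFinset.mpr ?_⟩
      intro j
      by_cases hj : j = i
      · rw [if_pos hj, hj, Finset.mem_singleton]
      · rw [if_neg hj]
        rw [Finset.mem_sdiff]
        exact ⟨mem_univ _, fun hmem => (hg j) ((Finset.mem_filter.mp hmem).2)⟩
    calc (univ.filter (fun g : Fin s → Fin n => ∀ j, ¬ D (g i) (g j))).card
        ≤ ∑ u : Fin n, (Fintype.piFinset (fun j : Fin s =>
            if j = i then ({u} : Finset (Fin n))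
            else (univ \ univ.filter (fun w => D u w)))).card :=
          le_trans (Finset.card_le_card hsub2) Finset.card_biUnion_le
      _ ≤ ∑ _u : Fin n, (n - d)^(s-1) := by
          apply Finset.sum_le_sum
          intro u _
          rw [Fintype.card_piFinset]
          rw [← Finset.prod_erase_mul _ _ (mem_univ i)]
          have h1 : (if i = i then ({u} : Finset (Fin n))
              else (univ \ univ.filter (fun w => D u w))).card = 1 := by
            rw [if_pos rfl, Finset.card_singleton]
          rw [h1, mul_one]
          have h2 : ∀ j ∈ univ.erase i, (if j = i then ({u} : Finset (Fin n))
              else (univ \ univ.filter (fun w => D u w))).card = n - (univ.filter (fun w => D u w)).card := by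
            intro j hj
            rw [if_neg (Finset.mem_erase.mp hj).1]
            rw [Finset.card_sdiff_of_subset (subset_univ _), card_univ, Fintype.card_fin]
          rw [Finset.prod_congr rfl h2, Finset.prod_const]
          have hcard : (univ.erase i).card = s - 1 := by
            rw [Finset.card_erase_of_mem (mem_univ i), card_univ, Fintype.card_fin]
          rw [hcard]
          apply Nat.pow_le_pow_left
          exact Nat.sub_le_sub_left (hdeg u) n
      _ = n * (n - d)^(s-1) := by rw [Finset.sum_const, card_univ, Fintype.card_fin, smul_eq_mul]
  calc (univ.filter (fun g : Fin s → Fin n => ¬ ∀ i, ∃ j, D (g i) (g j))).card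
      ≤ ∑ i : Fin s, (univ.filter (fun g : Fin s → Fin n => ∀ j, ¬ D (g i) (g j))).card :=
        le_trans (Finset.card_le_card hsub) Finset.card_biUnion_le
    _ ≤ ∑ _i : Fin s, n * (n - d)^(s-1) := Finset.sum_le_sum (fun i _ => hone i)
    _ = s * (n * (n - d)^(s-1)) := by rw [Finset.sum_const, card_univ, Fintype.card_fin, smul_eq_mul]

private lemma completion_count {n t : ℕ} (ht : 2 ≤ t) (G₁ G₂ : SimpleGraph (Fin n))
    [DecidableRel G₁.Adj] [DecidableRel G₂.Adj] (m : ℕ)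
    (e : Fin t → Fin (2*t)) (he : ∀ k, (e k).val = 2 * k.val)
    (c₀ : Fin t → Fin n) (hc₀inj : Function.Injective c₀)
    (hc₀D : ∀ j : Fin t, m ≤ (((univ.filter (fun v => G₁.Adj (c₀ j) v)) ∩
        (univ.filter (fun v => G₂.Adj (c₀ (cyc j)) v))).card)) :
    ((m - t : ℕ) ^ t : ℝ) - (t:ℝ)^2 * (n:ℝ)^(t-1)
      ≤ ((univ.filter (fun f : Fin (2*t) → Fin n =>
            (Function.Injective f ∧
              ∀ i : Fin (2*t), (Even i.val → G₁.Adj (f i) (f (cyc i))) ∧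
                (¬ Even i.val → G₂.Adj (f i) (f (cyc i)))) ∧
            (∀ k : Fin t, f (e k) = c₀ k))).card : ℝ) := by
  classical
  set A : Fin t → Finset (Fin n) := fun j =>
    ((univ.filter (fun v => G₁.Adj (c₀ j) v)) ∩
      (univ.filter (fun v => G₂.Adj (c₀ (cyc j)) v))) \ (univ.image c₀) with hAdef
  have hAcard : ∀ j, m - t ≤ (A j).card := by
    intro j
    have h1 : ((univ.filter (fun v => G₁.Adj (c₀ j) v)) ∩
        (univ.filter (fun v => G₂.Adj (c₀ (cyc j)) v))).card - (univ.image c₀).card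
        ≤ (A j).card := by
      rw [hAdef]
      exact Finset.le_card_sdiff _ _
    have h2 : (univ.image c₀).card ≤ t := by
      calc (univ.image c₀).card ≤ (univ : Finset (Fin t)).card := Finset.card_image_le
        _ = t := by rw [card_univ, Fintype.card_fin]
    have h3 := hc₀D j
    omega
  have hAmem : ∀ (v : Fin t → Fin n), v ∈ Fintype.piFinset A → ∀ j,
      G₁.Adj (c₀ j) (v j) ∧ G₂.Adj (c₀ (cyc j)) (v j) ∧ v j ∉ univ.image c₀ := by
    intro v hv j
    have := Fintype.mem_piFinset.mp hv j
    rw [hAdef, Finset.mem_sdiff, Finset.mem_inter, Finset.mem_filter, Finset.mem_filter] at this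
    exact ⟨this.1.1.2, this.1.2.2, this.2⟩
  set V := (Fintype.piFinset A).filter (fun v => Function.Injective v) with hVdef
  have hVlow := card_inj_pi_ge A (m - t) hAcard
  -- the interleaving map
  have hhalf : ∀ i : Fin (2*t), i.val / 2 < t := by
    intro i; have := i.isLt; omega
  set Φ : (Fin t → Fin n) → (Fin (2*t) → Fin n) := fun v i =>
    if Even i.val then c₀ ⟨i.val / 2, hhalf i⟩ else v ⟨i.val / 2, hhalf i⟩ with hΦdef
  have key : ∀ v ∈ V, (Function.Injective (Φ v) ∧
      ∀ i : Fin (2*t), (Even i.val → G₁.Adj (Φ v i) (Φ v (cyc i))) ∧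
        (¬ Even i.val → G₂.Adj (Φ v i) (Φ v (cyc i)))) ∧
      (∀ k : Fin t, Φ v (e k) = c₀ k) := by
    intro v hv
    rw [hVdef, Finset.mem_filter] at hv
    obtain ⟨hvpi, hvinj⟩ := hv
    have hprop := hAmem v hvpi
    have hvnotin : ∀ j k, v j ≠ c₀ k := by
      intro j k heq
      exact (hprop j).2.2 (Finset.mem_image.mpr ⟨k, mem_univ _, heq.symm⟩)
    constructor
    · constructor
      · -- injectivity
        intro i i' heq
        rcases Nat.even_or_odd i.val with hpi | hpi <;> rcases Nat.even_or_odd i'.val with hpi' | hpi'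
        · rw [hΦdef] at heq
          simp only [if_pos hpi, if_pos hpi'] at heq
          have := hc₀inj heq
          have hval : i.val / 2 = i'.val / 2 := congrArg Fin.val this
          obtain ⟨r, hr⟩ := hpi; obtain ⟨r', hr'⟩ := hpi'
          apply Fin.ext; omega
        · exfalso
          rw [hΦdef] at heq
          simp only [if_pos hpi, if_neg (Nat.not_even_iff_odd.mpr hpi')] at heq
          exact hvnotin _ _ heq.symm
        · exfalso
          rw [hΦdef] at heq
          simp only [if_neg (Nat.not_even_iff_odd.mpr hpi), if_pos hpi'] at heq
          exact hvnotin _ _ heq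
        · rw [hΦdef] at heq
          simp only [if_neg (Nat.not_even_iff_odd.mpr hpi), if_neg (Nat.not_even_iff_odd.mpr hpi')] at heq
          have := hvinj heq
          have hval : i.val / 2 = i'.val / 2 := congrArg Fin.val this
          obtain ⟨r, hr⟩ := hpi; obtain ⟨r', hr'⟩ := hpi'
          apply Fin.ext; omega
      · -- adjacency
        intro i
        constructor
        · intro hpi
          obtain ⟨r, hr⟩ := hpi
          have hi2 : i.val + 1 < 2*t := by have := i.isLt; omega
          have hcyci : (cyc i).val = i.val + 1 := by
            show (i.val + 1) % (2*t) = i.val + 1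
            exact Nat.mod_eq_of_lt hi2
          have hodd : ¬ Even (cyc i).val := by
            rw [hcyci]; rw [Nat.even_add_one]; intro h; exact h ⟨r, hr⟩
          have heven : Even i.val := ⟨r, hr⟩
          rw [hΦdef]
          simp only [if_pos heven, if_neg hodd]
          have hidx : (⟨(cyc i).val / 2, hhalf _⟩ : Fin t) = ⟨i.val / 2, hhalf i⟩ := by
            apply Fin.ext; simp only; omega
          rw [hidx]
          exact (hprop ⟨i.val / 2, hhalf i⟩).1
        · intro hpi
          have hoddi := Nat.not_even_iff_odd.mp hpi
          obtain ⟨r, hr⟩ := hoddi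
          have hrt : r < t := by have := i.isLt; omega
          set j : Fin t := ⟨i.val / 2, hhalf i⟩ with hjdef
          have hjr : j.val = r := by rw [hjdef]; simp only; omega
          have hΦi : Φ v i = v j := by
            rw [hΦdef]; simp only [if_neg hpi]; rfl
          have hkey : Φ v (cyc i) = c₀ (cyc j) := by
            by_cases hlast : i.val + 1 < 2*t
            · have hcyci : (cyc i).val = i.val + 1 := Nat.mod_eq_of_lt hlast
              have heven : Even (cyc i).val := by rw [hcyci]; exact ⟨r+1, by omega⟩
              rw [hΦdef]
              simp only [if_pos heven]
              congr 1
              apply Fin.ext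
              show (cyc i).val / 2 = (j.val + 1) % t
              rw [hcyci]
              have : (j.val + 1) % t = j.val + 1 := Nat.mod_eq_of_lt (by omega)
              omega
            · have hieq : i.val + 1 = 2*t := by have := i.isLt; omega
              have hcyci : (cyc i).val = 0 := by
                show (i.val + 1) % (2*t) = 0
                rw [hieq, Nat.mod_self]
              have heven : Even (cyc i).val := by rw [hcyci]; exact ⟨0, rfl⟩
              rw [hΦdef]
              simp only [if_pos heven]
              congr 1
              apply Fin.ext
              show (cyc i).val / 2 = (j.val + 1) % t
              rw [hcyci]
              have hjt : j.val + 1 = t := by omega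
              rw [hjt, Nat.mod_self]
          rw [hΦi, hkey]
          exact ((hprop j).2.1).symm
    · -- pattern condition
      intro k
      have hek : Even (e k).val := by rw [he k]; exact ⟨k.val, by omega⟩
      rw [hΦdef]
      simp only [if_pos hek]
      congr 1
      apply Fin.ext
      show (e k).val / 2 = k.val
      rw [he k]; omega
  have hmaps : ∀ v ∈ V, Φ v ∈ univ.filter (fun f : Fin (2*t) → Fin n =>
      (Function.Injective f ∧
        ∀ i : Fin (2*t), (Even i.val → G₁.Adj (f i) (f (cyc i))) ∧
          (¬ Even i.val → G₂.Adj (f i) (f (cyc i)))) ∧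
      (∀ k : Fin t, f (e k) = c₀ k)) := by
    intro v hv
    exact Finset.mem_filter.mpr ⟨mem_univ _, key v hv⟩
  have hinjOn : Set.InjOn Φ V := by
    intro v hv v' hv' heq
    funext j
    have hpos : 2 * j.val + 1 < 2 * t := by have := j.isLt; omega
    have hodd : ¬ Even ((⟨2*j.val+1, hpos⟩ : Fin (2*t)).val) := by
      simp only [Nat.even_iff]
      omega
    have h1 : Φ v ⟨2*j.val+1, hpos⟩ = v j := by
      rw [hΦdef]; simp only [if_neg hodd]
      congr 1; apply Fin.ext; simp only; omega
    have h2 : Φ v' ⟨2*j.val+1, hpos⟩ = v' j := by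
      rw [hΦdef]; simp only [if_neg hodd]
      congr 1; apply Fin.ext; simp only; omega
    rw [← h1, ← h2, heq]
  have hcard := Finset.card_le_card_of_injOn Φ hmaps hinjOn
  calc ((m - t : ℕ) ^ t : ℝ) - (t:ℝ)^2 * (n:ℝ)^(t-1) ≤ (V.card : ℝ) := hVlow
    _ ≤ _ := by exact_mod_cast hcard

set_option maxHeartbeats 1000000

/-- For every `γ ∈ (0,1)` there are `c > 0`, `L` and `K` such that every
2-edge-coloured graph (red graph `G₁`, blue graph `G₂`) on `n ≥ K` vertices with red
and blue minimum degree at least `γn` contains at least `c·n^ℓ` copies of a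
colour-alternating cycle of some fixed even length `4 ≤ ℓ ≤ L`.  Copies are counted
as injective maps `f : Fin ℓ → V` whose edges alternate red (at even positions) and
blue (at odd positions). -/
theorem stmt_2 (γ : ℝ) (hγ0 : 0 < γ) (hγ1 : γ < 1) :
    ∃ c : ℝ, 0 < c ∧ ∃ L K : ℕ,
      ∀ n : ℕ, K ≤ n → ∀ G₁ G₂ : SimpleGraph (Fin n),
        (∀ v, γ * n ≤ ({u | G₁.Adj v u}.ncard : ℝ)) →
        (∀ v, γ * n ≤ ({u | G₂.Adj v u}.ncard : ℝ)) →
        ∃ ℓ : ℕ, 4 ≤ ℓ ∧ ℓ ≤ L ∧ Even ℓ ∧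
          c * (n : ℝ) ^ ℓ ≤
            ({f : Fin ℓ → Fin n | Function.Injective f ∧
              ∀ i : Fin ℓ, (Even i.val → G₁.Adj (f i) (f (cyc i))) ∧
                (¬ Even i.val → G₂.Adj (f i) (f (cyc i)))}.ncard : ℝ) := by
  classical
  have hγ2 : 0 < γ^2 := by positivity
  set β : ℝ := γ^2/8 with hβdef
  have hβ0 : 0 < β := by positivity
  have hβ8 : β ≤ 1/8 := by rw [hβdef]; nlinarith
  have hq2 : (γ^2/4 : ℝ) ≤ 1 := by nlinarith
  obtain ⟨s, hs3, hsb⟩ := exists_good_s (r := 1-β) (by linarith) (by linarith)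
  have hs0 : 0 < s := by omega
  have hs1 : (1:ℝ) ≤ (s:ℝ) := by exact_mod_cast Nat.one_le_iff_ne_zero.mpr (by omega)
  set c : ℝ := (γ^2/4)^s / (4 * (s:ℝ)^(s+1)) with hcdef
  have hc0 : 0 < c := by rw [hcdef]; positivity
  set Kr : ℝ := 8/γ^2 + 4*(s:ℝ)/γ^2 + 2*(s:ℝ)^2*(4/γ^2)^s + 1 with hKrdef
  refine ⟨c, hc0, 2*s, ⌈Kr⌉₊, ?_⟩
  intro n hn G₁ G₂ hdeg1 hdeg2
  have hnKr : Kr ≤ (n:ℝ) := le_trans (Nat.le_ceil Kr) (by exact_mod_cast hn)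
  have hterm1 : (0:ℝ) ≤ 8/γ^2 := by positivity
  have hterm2 : (0:ℝ) ≤ 4*(s:ℝ)/γ^2 := by positivity
  have hterm3 : (0:ℝ) ≤ 2*(s:ℝ)^2*(4/γ^2)^s := by positivity
  have hn1 : (1:ℝ) ≤ (n:ℝ) := by rw [hKrdef] at hnKr; linarith
  have hn0 : 0 < n := by exact_mod_cast lt_of_lt_of_le zero_lt_one hn1
  have hn8 : 8 ≤ γ^2 * (n:ℝ) := by
    have h : 8/γ^2 ≤ (n:ℝ) := by rw [hKrdef] at hnKr; linarith
    rw [div_le_iff₀ hγ2] at h; linarith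
  have hns : 4*(s:ℝ) ≤ γ^2 * (n:ℝ) := by
    have h : 4*(s:ℝ)/γ^2 ≤ (n:ℝ) := by rw [hKrdef] at hnKr; linarith
    rw [div_le_iff₀ hγ2] at h; linarith
  have hnC : 2*(s:ℝ)^2*(4/γ^2)^s ≤ (n:ℝ) := by rw [hKrdef] at hnKr; linarith
  -- neighbourhoods
  set N₁ : Fin n → Finset (Fin n) := fun u => univ.filter (fun v => G₁.Adj u v) with hN₁def
  set N₂ : Fin n → Finset (Fin n) := fun u => univ.filter (fun v => G₂.Adj u v) with hN₂def
  have hcard1 : ∀ u, γ * n ≤ ((N₁ u).card : ℝ) := by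
    intro u
    have h := hdeg1 u
    rwa [ncard_eq_filter_card (fun v => G₁.Adj u v)] at h
  have hcard2 : ∀ u, γ * n ≤ ((N₂ u).card : ℝ) := by
    intro u
    have h := hdeg2 u
    rwa [ncard_eq_filter_card (fun v => G₂.Adj u v)] at h
  have hsym2 : ∀ v w, w ∈ N₂ v ↔ v ∈ N₂ w := by
    intro v w
    rw [hN₂def]
    simp only [mem_filter, mem_univ, true_and]
    exact G₂.adj_comm v w
  -- the auxiliary digraph
  set m : ℕ := ⌈γ^2*(n:ℝ)/2⌉₊ with hmdef
  have hmlow : γ^2*(n:ℝ)/2 ≤ (m:ℝ) := Nat.le_ceil _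
  have hmup : (m:ℝ) ≤ γ^2*(n:ℝ)/2 + 1 := le_of_lt (Nat.ceil_lt_add_one (by positivity))
  have hm1 : 1 ≤ m := by
    have : (0:ℝ) < γ^2*(n:ℝ)/2 := by positivity
    exact Nat.one_le_iff_ne_zero.mpr (by
      intro h0
      rw [hmdef] at h0
      have := Nat.ceil_eq_zero.mp h0
      linarith)
  set D : Fin n → Fin n → Prop := fun u w => u ≠ w ∧ m ≤ ((N₁ u) ∩ (N₂ w)).card with hDdef
  have hDirr : ∀ x, ¬ D x x := fun x h => h.1 rfl
  have hdegD : ∀ u, γ^2*(n:ℝ)/4 ≤ ((univ.filter (fun w => D u w)).card : ℝ) := by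
    intro u
    exact outdeg_bound γ hγ0 N₁ N₂ hsym2 hcard1 hcard2 m hmup hm1 hn8 hn0 D
      (fun u w => Iff.rfl) u
  set d : ℕ := ⌈γ^2*(n:ℝ)/4⌉₊ with hddef
  have hdle : ∀ u, d ≤ (univ.filter (fun w => D u w)).card := by
    intro u
    rw [hddef]
    exact Nat.ceil_le.mpr (hdegD u)
  have hdlow : γ^2*(n:ℝ)/4 ≤ (d:ℝ) := Nat.le_ceil _
  have hdn : d ≤ n := le_trans (hdle ⟨0, hn0⟩)
    (le_trans (Finset.card_le_card (subset_univ _)) (by rw [card_univ, Fintype.card_fin]))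
  -- bad and good tuples
  set Bad := univ.filter (fun g : Fin s → Fin n => ¬ ∀ i, ∃ j, D (g i) (g j)) with hBaddef
  set Good := univ.filter (fun g : Fin s → Fin n => ∀ i, ∃ j, D (g i) (g j)) with hGooddef
  have hbadR : (Bad.card : ℝ) ≤ (1/2) * (n:ℝ)^s := by
    have h1 := bad_count (s := s) D d hdle
    have h2 : ((n - d : ℕ):ℝ) ≤ (1-2*β)*(n:ℝ) := by
      rw [Nat.cast_sub hdn]
      have : 2*β*(n:ℝ) ≤ (d:ℝ) := by
        rw [hβdef]; calc 2*(γ^2/8)*(n:ℝ) = γ^2*(n:ℝ)/4 := by ring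
          _ ≤ (d:ℝ) := hdlow
      linarith
    have h2' : (0:ℝ) ≤ 1-2*β := by linarith
    have h3 : (((n - d : ℕ)^(s-1) : ℕ):ℝ) ≤ ((1-2*β)*(n:ℝ))^(s-1) := by
      push_cast
      exact pow_le_pow_left₀ (by positivity) h2 _
    calc (Bad.card : ℝ) ≤ (s:ℝ) * ((n:ℝ) * (((n - d : ℕ)^(s-1) : ℕ):ℝ)) := by
          have := h1
          have hc : (Bad.card : ℝ) ≤ ((s * (n * (n - d)^(s-1)) : ℕ) : ℝ) := by
            exact_mod_cast h1
          calc (Bad.card : ℝ) ≤ ((s * (n * (n - d)^(s-1)) : ℕ) : ℝ) := hc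
            _ = (s:ℝ) * ((n:ℝ) * (((n - d : ℕ)^(s-1) : ℕ):ℝ)) := by push_cast; ring
      _ ≤ (s:ℝ) * ((n:ℝ) * ((1-2*β)*(n:ℝ))^(s-1)) := by
          apply mul_le_mul_of_nonneg_left _ (by positivity)
          exact mul_le_mul_of_nonneg_left h3 (by positivity)
      _ ≤ (s:ℝ) * ((n:ℝ) * ((1-β)*(n:ℝ))^(s-1)) := by
          apply mul_le_mul_of_nonneg_left _ (by positivity)
          apply mul_le_mul_of_nonneg_left _ (by positivity)
          apply pow_le_pow_left₀ (by positivity)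
          nlinarith
      _ = ((s:ℝ) * (1-β)^(s-1)) * ((n:ℝ) * (n:ℝ)^(s-1)) := by rw [mul_pow]; ring
      _ ≤ (1/2) * ((n:ℝ) * (n:ℝ)^(s-1)) := by
          apply mul_le_mul_of_nonneg_right hsb (by positivity)
      _ = (1/2) * (n:ℝ)^s := by
          have hh : (n:ℝ)^(s-1) * (n:ℝ) = (n:ℝ)^s := by
            conv_rhs => rw [← Nat.sub_add_cancel hs0]
            rw [pow_succ]
          rw [← hh]; ring
  have hGB : Good.card + Bad.card = n^s := by
    rw [hGooddef, hBaddef]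
    rw [Finset.card_filter_add_card_filter_not]
    rw [card_univ]
    rw [Fintype.card_fun, Fintype.card_fin, Fintype.card_fin]
  have hgoodR : (n:ℝ)^s / 2 ≤ (Good.card : ℝ) := by
    have hcast : (Good.card:ℝ) + (Bad.card:ℝ) = (n:ℝ)^s := by exact_mod_cast hGB
    linarith
  -- extraction of cycles from good tuples
  set TF : (Fin s → Fin n) → ℕ := fun g =>
    if h : ∀ i, ∃ j, D (g i) (g j) then (extract_cycle D hDirr hs0 g h).choose else 0 with hTFdef
  set FF : (Fin s → Fin n) → ℕ → Fin n := fun g =>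
    if h : ∀ i, ∃ j, D (g i) (g j)
    then ((extract_cycle D hDirr hs0 g h).choose_spec.2.2).choose
    else (fun _ => g ⟨0, hs0⟩) with hFFdef
  have hTFF : ∀ g, (∀ i, ∃ j, D (g i) (g j)) →
      2 ≤ TF g ∧ TF g ≤ s ∧
      (∀ k k', k < TF g → k' < TF g → FF g k = FF g k' → k = k') ∧
      (∀ k, k < TF g → D (FF g k) (FF g ((k+1) % TF g))) ∧
      (∀ k, k < TF g → ∃ j, g j = FF g k) := by
    intro g h
    rw [hTFdef, hFFdef]
    simp only [dif_pos h]
    obtain ⟨h1, h2, hf⟩ := (extract_cycle D hDirr hs0 g h).choose_spec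
    exact ⟨h1, h2, hf.choose_spec.1, hf.choose_spec.2.1, hf.choose_spec.2.2⟩
  have hfibsum : Good.card = ∑ t ∈ Finset.Icc 2 s, (Good.filter (fun g => TF g = t)).card := by
    apply Finset.card_eq_sum_card_fiberwise
    intro g hg
    rw [hGooddef, mem_coe, mem_filter] at hg
    have := hTFF g hg.2
    exact Finset.mem_coe.mpr <| Finset.mem_Icc.mpr ⟨this.1, this.2.1⟩
  obtain ⟨t₀, ht₀mem, ht₀max⟩ := Finset.exists_max_image (Finset.Icc 2 s)
    (fun t => (Good.filter (fun g => TF g = t)).card)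
    ⟨2, Finset.mem_Icc.mpr ⟨le_refl 2, by omega⟩⟩
  obtain ⟨ht₀2, ht₀s⟩ := Finset.mem_Icc.mp ht₀mem
  set Gt := Good.filter (fun g => TF g = t₀) with hGtdef
  have hGtlow : Good.card ≤ s * Gt.card := by
    calc Good.card = ∑ t ∈ Finset.Icc 2 s, (Good.filter (fun g => TF g = t)).card := hfibsum
      _ ≤ (Finset.Icc 2 s).card • Gt.card :=
          Finset.sum_le_card_nsmul _ _ _ (fun t ht => ht₀max t ht)
      _ = (Finset.Icc 2 s).card * Gt.card := by rw [smul_eq_mul]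
      _ ≤ s * Gt.card := Nat.mul_le_mul_right _ (by rw [Nat.card_Icc]; omega)
  set Cyc := univ.filter (fun F : Fin t₀ → Fin n =>
    Function.Injective F ∧ ∀ k, D (F k) (F (cyc k))) with hCycdef
  set ψ : (Fin s → Fin n) → (Fin t₀ → Fin n) := fun g k => FF g k.val with hψdef
  have himg : ∀ g ∈ Gt, ψ g ∈ Cyc := by
    intro g hg
    rw [hGtdef, mem_filter, hGooddef, mem_filter] at hg
    obtain ⟨⟨_, hgood⟩, hTFg⟩ := hg
    obtain ⟨_, _, hinj, hedge, _⟩ := hTFF g hgood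
    rw [hCycdef, mem_filter]
    refine ⟨mem_univ _, ?_, ?_⟩
    · intro k k' heq
      apply Fin.ext
      refine hinj k.val k'.val (by rw [hTFg]; exact k.isLt) (by rw [hTFg]; exact k'.isLt) ?_
      rw [hψdef] at heq
      exact heq
    · intro k
      have hE := hedge k.val (by rw [hTFg]; exact k.isLt)
      rw [hTFg] at hE
      show D (ψ g k) (ψ g (cyc k))
      rw [hψdef]
      exact hE
  have hCycinj : ∀ F₀ ∈ Gt.image ψ, Function.Injective F₀ := by
    intro F₀ hF₀
    obtain ⟨g₀, hg₀, rfl⟩ := Finset.mem_image.mp hF₀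
    have hmem := himg g₀ hg₀
    rw [hCycdef, mem_filter] at hmem
    exact hmem.2.1
  have hfiber : ∀ F₀ ∈ Gt.image ψ,
      (Gt.filter (fun g => ψ g = F₀)).card ≤ s^t₀ * n^(s-t₀) := by
    intro F₀ hF₀
    calc (Gt.filter (fun g => ψ g = F₀)).card
        ≤ (univ.filter (fun g : Fin s → Fin n => ∀ k : Fin t₀, ∃ j, g j = F₀ k)).card := by
          apply Finset.card_le_card
          intro g hg
          rw [mem_filter] at hg ⊢
          obtain ⟨hgGt, hgψ⟩ := hg
          refine ⟨mem_univ _, ?_⟩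
          intro k
          rw [hGtdef, mem_filter, hGooddef, mem_filter] at hgGt
          obtain ⟨⟨_, hgood⟩, hTFg⟩ := hgGt
          obtain ⟨_, _, _, _, hrange⟩ := hTFF g hgood
          obtain ⟨j, hj⟩ := hrange k.val (by rw [hTFg]; exact k.isLt)
          refine ⟨j, ?_⟩
          rw [hj]
          calc FF g k.val = ψ g k := by rw [hψdef]
            _ = F₀ k := by rw [hgψ]
      _ ≤ s^t₀ * n^(s-t₀) := card_range_superset hs0 F₀ (hCycinj F₀ hF₀)
  have hGtupper : Gt.card ≤ (s^t₀ * n^(s-t₀)) * Cyc.card := by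
    calc Gt.card ≤ (s^t₀*n^(s-t₀)) * (Gt.image ψ).card :=
          Finset.card_le_mul_card_image Gt _ hfiber
      _ ≤ (s^t₀*n^(s-t₀)) * Cyc.card := by
          apply Nat.mul_le_mul_left
          apply Finset.card_le_card
          intro F₀ hF₀
          obtain ⟨g₀, hg₀, rfl⟩ := Finset.mem_image.mp hF₀
          exact himg g₀ hg₀
  have hC0 : (0:ℝ) ≤ (Cyc.card:ℝ) := Nat.cast_nonneg _
  have hnpow : (0:ℝ) < (n:ℝ)^(s-t₀) := by positivity
  have hCycLow : (n:ℝ)^t₀ ≤ 2 * (s:ℝ)^(s+1) * (Cyc.card:ℝ) := by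
    have h1 : (Good.card:ℝ) ≤ (s:ℝ) * (Gt.card:ℝ) := by exact_mod_cast hGtlow
    have h2 : (Gt.card:ℝ) ≤ (s:ℝ)^t₀ * (n:ℝ)^(s-t₀) * (Cyc.card:ℝ) := by exact_mod_cast hGtupper
    have hA : (n:ℝ)^s/2 ≤ (s:ℝ) * ((s:ℝ)^t₀ * (n:ℝ)^(s-t₀) * (Cyc.card:ℝ)) := by
      calc (n:ℝ)^s/2 ≤ (Good.card:ℝ) := hgoodR
        _ ≤ (s:ℝ) * (Gt.card:ℝ) := h1
        _ ≤ _ := mul_le_mul_of_nonneg_left h2 (by positivity)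
    have hspow : (s:ℝ) * (s:ℝ)^t₀ ≤ (s:ℝ)^(s+1) := by
      calc (s:ℝ) * (s:ℝ)^t₀ = (s:ℝ)^(t₀+1) := by rw [pow_succ]; ring
        _ ≤ (s:ℝ)^(s+1) := pow_le_pow_right₀ hs1 (by omega)
    have hsplit : (n:ℝ)^s = (n:ℝ)^t₀ * (n:ℝ)^(s-t₀) := by
      rw [← pow_add]
      congr 1
      omega
    have step : (s:ℝ) * ((s:ℝ)^t₀ * (n:ℝ)^(s-t₀) * (Cyc.card:ℝ))
        ≤ (s:ℝ)^(s+1) * ((n:ℝ)^(s-t₀) * (Cyc.card:ℝ)) := by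
      have hmul := mul_le_mul_of_nonneg_right hspow (mul_nonneg (le_of_lt hnpow) hC0)
      calc (s:ℝ) * ((s:ℝ)^t₀ * (n:ℝ)^(s-t₀) * (Cyc.card:ℝ))
          = ((s:ℝ)*(s:ℝ)^t₀) * ((n:ℝ)^(s-t₀)*(Cyc.card:ℝ)) := by ring
        _ ≤ _ := hmul
    have h2T : (n:ℝ)^s ≤ 2 * ((s:ℝ)^(s+1) * ((n:ℝ)^(s-t₀) * (Cyc.card:ℝ))) := by linarith
    have hfin : (n:ℝ)^t₀ * (n:ℝ)^(s-t₀) ≤ (2*(s:ℝ)^(s+1)*(Cyc.card:ℝ)) * (n:ℝ)^(s-t₀) := by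
      calc (n:ℝ)^t₀ * (n:ℝ)^(s-t₀) = (n:ℝ)^s := hsplit.symm
        _ ≤ 2 * ((s:ℝ)^(s+1) * ((n:ℝ)^(s-t₀) * (Cyc.card:ℝ))) := h2T
        _ = (2*(s:ℝ)^(s+1)*(Cyc.card:ℝ)) * (n:ℝ)^(s-t₀) := by ring
    exact le_of_mul_le_mul_right hfin hnpow
  -- completion of cycles to alternating cycles
  obtain ⟨e, he⟩ : ∃ e : Fin t₀ → Fin (2*t₀), ∀ k, (e k).val = 2*k.val :=
    ⟨fun k => ⟨2*k.val, by have := k.isLt; omega⟩, fun k => rfl⟩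
  set Target := univ.filter (fun f : Fin (2*t₀) → Fin n => Function.Injective f ∧
    ∀ i : Fin (2*t₀), (Even i.val → G₁.Adj (f i) (f (cyc i))) ∧
      (¬ Even i.val → G₂.Adj (f i) (f (cyc i)))) with hTargetdef
  set π : (Fin (2*t₀) → Fin n) → (Fin t₀ → Fin n) := fun f k => f (e k) with hπdef
  set Y : ℝ := (((m - t₀ : ℕ)^t₀ : ℕ) : ℝ) - (t₀:ℝ)^2*(n:ℝ)^(t₀-1) with hYdef
  have hcomp : ∀ c₀ ∈ Cyc, Y ≤ ((Target.filter (fun f => π f = c₀)).card : ℝ) := by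
    intro c₀ hc₀
    rw [hCycdef, mem_filter] at hc₀
    obtain ⟨_, hc₀inj, hc₀edge⟩ := hc₀
    have hc₀D : ∀ j : Fin t₀, m ≤ (((univ.filter (fun v => G₁.Adj (c₀ j) v)) ∩
        (univ.filter (fun v => G₂.Adj (c₀ (cyc j)) v))).card) := by
      intro j
      exact (hc₀edge j).2
    have hcc := completion_count ht₀2 G₁ G₂ m e he c₀ hc₀inj hc₀D
    have hfeq : Target.filter (fun f => π f = c₀)
        = univ.filter (fun f : Fin (2*t₀) → Fin n =>
            (Function.Injective f ∧
              ∀ i : Fin (2*t₀), (Even i.val → G₁.Adj (f i) (f (cyc i))) ∧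
                (¬ Even i.val → G₂.Adj (f i) (f (cyc i)))) ∧
            (∀ k : Fin t₀, f (e k) = c₀ k)) := by
      rw [hTargetdef, Finset.filter_filter]
      apply Finset.filter_congr
      intro f _
      constructor
      · rintro ⟨hP, hπf⟩
        refine ⟨hP, fun k => ?_⟩
        rw [hπdef] at hπf
        exact congrFun hπf k
      · rintro ⟨hP, hptn⟩
        refine ⟨hP, ?_⟩
        rw [hπdef]
        funext k
        exact hptn k
    rw [hfeq, hYdef]
    convert hcc using 2
    push_cast
    ring
  have hTlow : (Cyc.card : ℝ) * Y ≤ (Target.card : ℝ) := by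
    have hsum : (Target.filter (fun f => π f ∈ Cyc)).card
        = ∑ c₀ ∈ Cyc, ((Target.filter (fun f => π f ∈ Cyc)).filter (fun f => π f = c₀)).card :=
      Finset.card_eq_sum_card_fiberwise (fun f hf => (mem_filter.mp hf).2)
    have hff : ∀ c₀ ∈ Cyc, (Target.filter (fun f => π f ∈ Cyc)).filter (fun f => π f = c₀)
        = Target.filter (fun f => π f = c₀) := by
      intro c₀ hc₀
      ext f
      simp only [mem_filter]
      constructor
      · rintro ⟨⟨hT, _⟩, hπf⟩
        exact ⟨hT, hπf⟩
      · rintro ⟨hT, hπf⟩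
        exact ⟨⟨hT, by rw [hπf]; exact hc₀⟩, hπf⟩
    have hsum2 : (Target.filter (fun f => π f ∈ Cyc)).card
        = ∑ c₀ ∈ Cyc, (Target.filter (fun f => π f = c₀)).card := by
      rw [hsum]
      exact Finset.sum_congr rfl (fun c₀ hc₀ => by rw [hff c₀ hc₀])
    have hle1 : ∑ c₀ ∈ Cyc, (Target.filter (fun f => π f = c₀)).card ≤ Target.card := by
      rw [← hsum2]
      exact Finset.card_le_card (Finset.filter_subset _ _)
    calc (Cyc.card : ℝ) * Y ≤ ∑ c₀ ∈ Cyc, ((Target.filter (fun f => π f = c₀)).card : ℝ) := by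
          have := Finset.card_nsmul_le_sum Cyc
            (fun c₀ => ((Target.filter (fun f => π f = c₀)).card : ℝ)) Y hcomp
          rwa [nsmul_eq_mul] at this
      _ = ((∑ c₀ ∈ Cyc, (Target.filter (fun f => π f = c₀)).card : ℕ) : ℝ) := by push_cast; rfl
      _ ≤ (Target.card : ℝ) := by exact_mod_cast hle1
  -- numeric lower bound for Y
  have ht₀sR : (t₀:ℝ) ≤ (s:ℝ) := by exact_mod_cast ht₀s
  have hsle : (s:ℝ) ≤ γ^2*(n:ℝ)/4 := by linarith
  have ht₀m : t₀ ≤ m := by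
    have : (t₀:ℝ) ≤ (m:ℝ) := by linarith
    exact_mod_cast this
  have hmt : γ^2*(n:ℝ)/4 ≤ ((m - t₀ : ℕ):ℝ) := by
    rw [Nat.cast_sub ht₀m]
    linarith
  have hq1 : (0:ℝ) ≤ γ^2/4 := by positivity
  have hpow1 : ((γ^2/4)^s : ℝ) ≤ (γ^2/4)^t₀ := pow_le_pow_of_le_one hq1 hq2 ht₀s
  have hY1 : (γ^2/4)^s * (n:ℝ)^t₀ ≤ (((m - t₀ : ℕ):ℝ))^t₀ := by
    calc (γ^2/4)^s * (n:ℝ)^t₀ ≤ (γ^2/4)^t₀ * (n:ℝ)^t₀ :=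
          mul_le_mul_of_nonneg_right hpow1 (by positivity)
      _ = (γ^2*(n:ℝ)/4)^t₀ := by rw [← mul_pow]; congr 1; ring
      _ ≤ (((m - t₀ : ℕ):ℝ))^t₀ := pow_le_pow_left₀ (by positivity) hmt _
  have hY2 : (t₀:ℝ)^2 * (n:ℝ)^(t₀-1) ≤ (1/2) * (γ^2/4)^s * (n:ℝ)^t₀ := by
    have hppow : ((γ^2/4):ℝ)^s * ((4/γ^2):ℝ)^s = 1 := by
      rw [← mul_pow]
      have : ((γ^2/4)*(4/γ^2) : ℝ) = 1 := by field_simp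
      rw [this, one_pow]
    have h1 : (γ^2/4)^s * (2*(s:ℝ)^2*(4/γ^2)^s) ≤ (γ^2/4)^s * (n:ℝ) :=
      mul_le_mul_of_nonneg_left hnC (by positivity)
    have h2 : (γ^2/4)^s * (2*(s:ℝ)^2*(4/γ^2)^s) = 2*(s:ℝ)^2 := by
      calc (γ^2/4)^s * (2*(s:ℝ)^2*(4/γ^2)^s)
          = 2*(s:ℝ)^2 * ((γ^2/4)^s * (4/γ^2)^s) := by ring
        _ = 2*(s:ℝ)^2 := by rw [hppow, mul_one]
    have ht₀2s : (t₀:ℝ)^2 ≤ (s:ℝ)^2 := by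
      apply pow_le_pow_left₀ (Nat.cast_nonneg t₀) ht₀sR
    have hkey : 2*(t₀:ℝ)^2 ≤ (γ^2/4)^s * (n:ℝ) := by linarith
    have hnsplit : (n:ℝ)^t₀ = (n:ℝ)^(t₀-1) * (n:ℝ) := by
      conv_lhs => rw [← Nat.sub_add_cancel (show 1 ≤ t₀ by omega)]
      rw [pow_succ]
    calc (t₀:ℝ)^2 * (n:ℝ)^(t₀-1) ≤ ((1/2) * ((γ^2/4)^s * (n:ℝ))) * (n:ℝ)^(t₀-1) := by
          apply mul_le_mul_of_nonneg_right _ (by positivity)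
          linarith
      _ = (1/2) * (γ^2/4)^s * (n:ℝ)^t₀ := by rw [hnsplit]; ring
  have hYlow : (1/2) * (γ^2/4)^s * (n:ℝ)^t₀ ≤ Y := by
    rw [hYdef]
    have hc1 : (((m - t₀ : ℕ)^t₀ : ℕ) : ℝ) = (((m - t₀:ℕ):ℝ))^t₀ := by push_cast; ring
    rw [hc1]
    linarith
  -- final assembly
  refine ⟨2*t₀, by omega, by omega, ⟨t₀, by omega⟩, ?_⟩
  have hncard : ({f : Fin (2*t₀) → Fin n | Function.Injective f ∧
      ∀ i : Fin (2*t₀), (Even i.val → G₁.Adj (f i) (f (cyc i))) ∧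
        (¬ Even i.val → G₂.Adj (f i) (f (cyc i)))}.ncard) = Target.card := by
    rw [hTargetdef]
    exact ncard_eq_filter_card _
  rw [hncard]
  have hCyclow' : (n:ℝ)^t₀ / (2*(s:ℝ)^(s+1)) ≤ (Cyc.card:ℝ) := by
    rw [div_le_iff₀ (by positivity)]
    calc (n:ℝ)^t₀ ≤ 2*(s:ℝ)^(s+1)*(Cyc.card:ℝ) := hCycLow
      _ = (Cyc.card:ℝ) * (2*(s:ℝ)^(s+1)) := by ring
  have hfinal : c * (n:ℝ)^(2*t₀) ≤ (Cyc.card:ℝ) * ((1/2) * (γ^2/4)^s * (n:ℝ)^t₀) := by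
    calc c * (n:ℝ)^(2*t₀)
        = ((n:ℝ)^t₀/(2*(s:ℝ)^(s+1))) * ((1/2) * (γ^2/4)^s * (n:ℝ)^t₀) := by
          rw [hcdef]
          have h2t : (n:ℝ)^(2*t₀) = (n:ℝ)^t₀*(n:ℝ)^t₀ := by rw [two_mul, pow_add]
          rw [h2t]
          have hsne : ((s:ℝ)^(s+1)) ≠ 0 := by positivity
          field_simp
          ring
      _ ≤ (Cyc.card:ℝ) * ((1/2) * (γ^2/4)^s * (n:ℝ)^t₀) :=
          mul_le_mul_of_nonneg_right hCyclow' (by positivity)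
  calc c * (n:ℝ)^(2*t₀) ≤ (Cyc.card:ℝ) * ((1/2)*(γ^2/4)^s*(n:ℝ)^t₀) := hfinal
    _ ≤ (Cyc.card:ℝ) * Y := mul_le_mul_of_nonneg_left hYlow hC0
    _ ≤ (Target.card:ℝ) := hTlow
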